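/- arXiv:2011.14210 — 2 statements merged into one kernel-verified Lean document; each statement's English description precedes it below -/
import Mathlib

section
/- Let p be a prime and α ≥ 1 with α < p such that π(p − α) ≠ π(p + α) − 1. Then every m with π(p − m) = π(p + m) − 1 and m ≥ 1 satisfies m < α; in particular D(p) < α. -/
open Nat

/-- X(p): set of m ≥ 1 with π(p − m) = π(p + m) − 1. -/
def insX (p : ℕ) : Set ℕ :=
  {m | 1 ≤ m ∧ Nat.primeCounting (p - m) = Nat.primeCounting (p + m) - 1}

/-- Degree of insulation: the maximum (sSup) of X(p). -/
noncomputable def degIns (p : ℕ) : ℕ := sSup (insX p)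

lemma aux_pc_succ (p : ℕ) (hp : p.Prime) :
    Nat.primeCounting (p - 1) + 1 = Nat.primeCounting p := by
  have h1 : p - 1 + 1 = p := Nat.succ_pred_eq_of_pos hp.pos
  unfold Nat.primeCounting Nat.primeCounting'
  rw [h1, Nat.count_succ, if_pos hp]

theorem degIns_lt_of_fail (p α : ℕ) (hp : p.Prime) (hα1 : 1 ≤ α) (hαp : α < p)
    (h : Nat.primeCounting (p - α) ≠ Nat.primeCounting (p + α) - 1) :
    (∀ m : ℕ, 1 ≤ m → Nat.primeCounting (p - m) = Nat.primeCounting (p + m) - 1 → m < α) ∧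
    degIns p < α := by
  have key : ∀ m : ℕ, 1 ≤ m → Nat.primeCounting (p - m) = Nat.primeCounting (p + m) - 1 →
      m < α := by
    intro m hm hmx
    by_contra hma
    push_neg at hma
    apply h
    have h1 : Nat.primeCounting (p - m) ≤ Nat.primeCounting (p - α) :=
      Nat.monotone_primeCounting (Nat.sub_le_sub_left hma p)
    have h2 : Nat.primeCounting (p + α) ≤ Nat.primeCounting (p + m) :=
      Nat.monotone_primeCounting (Nat.add_le_add_left hma p)
    have h3 : Nat.primeCounting (p - α) + 1 ≤ Nat.primeCounting (p + α) := by
      calc Nat.primeCounting (p - α) + 1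
          ≤ Nat.primeCounting (p - 1) + 1 :=
            Nat.add_le_add_right (Nat.monotone_primeCounting (Nat.sub_le_sub_left hα1 p)) 1
        _ = Nat.primeCounting p := aux_pc_succ p hp
        _ ≤ Nat.primeCounting (p + α) := Nat.monotone_primeCounting (Nat.le_add_right _ _)
    omega
  refine ⟨key, ?_⟩
  rcases Set.eq_empty_or_nonempty (insX p) with he | hne
  · simp [degIns, he]
    omega
  · have hle : sSup (insX p) ≤ α - 1 :=
      csSup_le hne fun x hx => Nat.le_sub_one_of_lt (key x hx.1 hx.2)
    have : degIns p ≤ α - 1 := hle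
    omega
end

section
/- Let p be a prime with D(p) even and well-defined. Then p − D(p) is prime or p + D(p) is prime. -/
open Nat

theorem neighbor_prime_of_even_degIns (p : ℕ) (hp : p.Prime)
    (hD : IsGreatest (insX p) (degIns p)) (heven : Even (degIns p))
    (hlt : degIns p < p) :
    (p - degIns p).Prime ∨ (p + degIns p).Prime := by
  set D := degIns p with hDdef
  obtain ⟨⟨hD1, heq⟩, hub⟩ := hD
  obtain ⟨k, hk⟩ := heven
  have hD2 : 2 ≤ D := by omega
  have hp3 : 3 ≤ p := by
    rcases hp.eq_one_or_self_of_dvd 1 ⟨p, (one_mul p).symm⟩ with h | h <;> omega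
  have hpodd : Odd p := hp.odd_of_ne_two (by omega)
  obtain ⟨j, hj⟩ := hpodd
  -- D + 1 is not in insX p
  have hfail : (D + 1) ∉ insX p := fun h => by have := hub h; omega
  -- π p ≥ 1
  have hπp : 1 ≤ Nat.primeCounting p := by
    have : Nat.primeCounting p = Nat.count Nat.Prime p + (if p.Prime then 1 else 0) := by
      simp [Nat.primeCounting, Nat.primeCounting', Nat.count_succ]
    simp [this, hp]
  have hmono : Monotone Nat.primeCounting := Nat.monotone_primeCounting
  have hle : Nat.primeCounting p ≤ Nat.primeCounting (p + D) := hmono (by omega)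
  have heq' : Nat.primeCounting (p + D) = Nat.primeCounting (p - D) + 1 := by omega
  -- p + D + 1 is not prime (it is even and > 2)
  have hnp : ¬ (p + D + 1).Prime := by
    intro h
    have : p + D + 1 = 2 := (h.even_iff).mp ⟨j + k + 1, by omega⟩
    omega
  have h1 : Nat.primeCounting (p + (D + 1)) = Nat.primeCounting (p + D) := by
    have : p + (D + 1) = (p + D) + 1 := by ring
    rw [this]
    simp [Nat.primeCounting, Nat.primeCounting', Nat.count_succ, hnp]
  have h2 : Nat.primeCounting (p - D) =
      Nat.primeCounting (p - (D + 1)) + (if (p - D).Prime then 1 else 0) := by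
    have h3 : p - D = (p - (D + 1)) + 1 := by omega
    rw [h3]
    simp [Nat.primeCounting, Nat.primeCounting', Nat.count_succ]
  by_cases hpr : (p - D).Prime
  · exact Or.inl hpr
  · exfalso
    apply hfail
    refine ⟨by omega, ?_⟩
    rw [h1, heq']
    simp [hpr] at h2
    omega
end
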